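/- Every multivariate polynomial p₃ of degree at most 3 in n variables can be written as p₃(x) = Σ_{i=1}^n x_i p₂^i(x) + Σ_{i=1}^n (1−x_i) q₂^i(x) + β₂(x) for all x ∈ ℝ^n, where each p₂^i, q₂^i, β₂ is a convex polynomial of degree at most 2. -/

import Mathlib

open Matrix Finset

/-- A convex polynomial of degree at most 2: a convex function of the form
`x ↦ xᵀ P x + rᵀ x + w`. -/
def IsConvexQuad {n : ℕ} (q : (Fin n → ℝ) → ℝ) : Prop :=
  ConvexOn ℝ Set.univ q ∧
    ∃ (P : Matrix (Fin n) (Fin n) ℝ) (r : Fin n → ℝ) (w : ℝ),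
      ∀ x, q x = x ⬝ᵥ P.mulVec x + r ⬝ᵥ x + w

namespace SLCAux

variable {n : ℕ}

lemma isConvexQuad_congr {f g : (Fin n → ℝ) → ℝ} (hf : IsConvexQuad f)
    (h : ∀ x, f x = g x) : IsConvexQuad g := by
  have : f = g := funext h
  rwa [this] at hf

lemma convexOn_affine (r : Fin n → ℝ) (w : ℝ) :
    ConvexOn ℝ Set.univ (fun x : Fin n → ℝ => r ⬝ᵥ x + w) := by
  refine ⟨convex_univ, fun x _ y _ a b ha hb hab => le_of_eq ?_⟩
  simp only [smul_eq_mul, dotProduct_add, dotProduct_smul]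
  linear_combination (-w) * hab

lemma isConvexQuad_affine (r : Fin n → ℝ) (w : ℝ) :
    IsConvexQuad (fun x : Fin n → ℝ => r ⬝ᵥ x + w) :=
  ⟨convexOn_affine r w, 0, r, w, by simp⟩

lemma isConvexQuad_zero : IsConvexQuad (fun _ : Fin n → ℝ => (0 : ℝ)) :=
  ⟨convexOn_const 0 convex_univ, 0, 0, 0, by simp⟩

lemma isConvexQuad_const (w : ℝ) : IsConvexQuad (fun _ : Fin n → ℝ => w) :=
  isConvexQuad_congr (isConvexQuad_affine 0 w) (fun x => by simp)

lemma isConvexQuad_linear (r : Fin n → ℝ) : IsConvexQuad (fun x : Fin n → ℝ => r ⬝ᵥ x) :=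
  isConvexQuad_congr (isConvexQuad_affine r 0) (fun x => by simp)

lemma isConvexQuad_add {f g : (Fin n → ℝ) → ℝ} (hf : IsConvexQuad f)
    (hg : IsConvexQuad g) : IsConvexQuad (fun x => f x + g x) := by
  obtain ⟨hfc, P, r, w, hfe⟩ := hf
  obtain ⟨hgc, Q, s, v, hge⟩ := hg
  refine ⟨hfc.add hgc, P + Q, r + s, w + v, fun x => ?_⟩
  show f x + g x = _
  rw [hfe, hge, Matrix.add_mulVec, dotProduct_add, add_dotProduct]
  ring

lemma vecMulVec_quad (v x : Fin n → ℝ) (a : ℝ) :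
    x ⬝ᵥ (a • vecMulVec v v).mulVec x = a * (v ⬝ᵥ x) ^ 2 := by
  simp only [dotProduct, Matrix.mulVec, Matrix.smul_apply, Matrix.vecMulVec_apply,
    smul_eq_mul, dotProduct]
  rw [pow_two, Finset.sum_mul, Finset.mul_sum]
  refine Finset.sum_congr rfl fun i _ => ?_
  rw [Finset.mul_sum, Finset.mul_sum, Finset.mul_sum]
  refine Finset.sum_congr rfl fun j _ => ?_
  ring

lemma isConvexQuad_smul_sq (a : ℝ) (ha : 0 ≤ a) (v : Fin n → ℝ) :
    IsConvexQuad (fun x : Fin n → ℝ => a * (v ⬝ᵥ x) ^ 2) := by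
  constructor
  · refine ⟨convex_univ, fun x _ y _ s t hs ht hst => ?_⟩
    simp only [smul_eq_mul, dotProduct_add, dotProduct_smul]
    have h : (s * (v ⬝ᵥ x) + t * (v ⬝ᵥ y)) ^ 2 ≤ s * (v ⬝ᵥ x) ^ 2 + t * (v ⬝ᵥ y) ^ 2 := by
      nlinarith [sq_nonneg (v ⬝ᵥ x - v ⬝ᵥ y), mul_nonneg hs ht]
    nlinarith [mul_le_mul_of_nonneg_left h ha]
  · exact ⟨a • vecMulVec v v, 0, 0, fun x => by rw [vecMulVec_quad]; simp⟩

/-- The representability predicate. -/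
def Repr (f : (Fin n → ℝ) → ℝ) : Prop :=
  ∃ (p₂ q₂ : Fin n → (Fin n → ℝ) → ℝ) (β₂ : (Fin n → ℝ) → ℝ),
    (∀ i, IsConvexQuad (p₂ i)) ∧ (∀ i, IsConvexQuad (q₂ i)) ∧ IsConvexQuad β₂ ∧
    ∀ x : Fin n → ℝ, f x = ∑ i, x i * p₂ i x + ∑ i, (1 - x i) * q₂ i x + β₂ x

lemma Repr.congr {f g : (Fin n → ℝ) → ℝ} (h : Repr f) (hfg : ∀ x, f x = g x) : Repr g := by
  obtain ⟨p, q, b, hp, hq, hb, he⟩ := h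
  exact ⟨p, q, b, hp, hq, hb, fun x => (hfg x) ▸ he x⟩

lemma Repr.add {f g : (Fin n → ℝ) → ℝ} (hf : Repr f) (hg : Repr g) :
    Repr (fun x => f x + g x) := by
  obtain ⟨p, q, b, hp, hq, hb, he⟩ := hf
  obtain ⟨p', q', b', hp', hq', hb', he'⟩ := hg
  refine ⟨fun i x => p i x + p' i x, fun i x => q i x + q' i x, fun x => b x + b' x,
    fun i => isConvexQuad_add (hp i) (hp' i), fun i => isConvexQuad_add (hq i) (hq' i),
    isConvexQuad_add hb hb', fun x => ?_⟩
  show f x + g x = _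
  rw [he x, he' x]
  simp only [mul_add, Finset.sum_add_distrib]
  ring

lemma Repr.zero : Repr (fun _ : Fin n → ℝ => (0 : ℝ)) :=
  ⟨fun _ _ => 0, fun _ _ => 0, fun _ => 0, fun _ => isConvexQuad_zero,
    fun _ => isConvexQuad_zero, isConvexQuad_zero, fun x => by simp⟩

lemma Repr.sum {α : Type*} (s : Finset α) (F : α → (Fin n → ℝ) → ℝ)
    (h : ∀ a ∈ s, Repr (F a)) : Repr (fun x => ∑ a ∈ s, F a x) := by
  classical
  induction s using Finset.induction_on with
  | empty => exact Repr.zero.congr (by simp)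
  | insert a s hnot ih =>
      exact ((h a (Finset.mem_insert_self a s)).add
        (ih (fun b hb => h b (Finset.mem_insert_of_mem hb)))).congr
        (fun x => by rw [Finset.sum_insert hnot])

lemma Repr.ofConvexQuad {f : (Fin n → ℝ) → ℝ} (hf : IsConvexQuad f) : Repr f :=
  ⟨fun _ _ => 0, fun _ _ => 0, f, fun _ => isConvexQuad_zero,
    fun _ => isConvexQuad_zero, hf, fun x => by simp⟩

lemma Repr.xiMul (i : Fin n) {f : (Fin n → ℝ) → ℝ} (hf : IsConvexQuad f) :
    Repr (fun x => x i * f x) := by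
  classical
  refine ⟨fun j => if j = i then f else fun _ => 0, fun _ _ => 0, fun _ => 0,
    fun j => ?_, fun _ => isConvexQuad_zero, isConvexQuad_zero, fun x => ?_⟩
  · by_cases h : j = i <;> simp [h, hf, isConvexQuad_zero]
  · simp [apply_ite (fun g : (Fin n → ℝ) → ℝ => g x), mul_ite, mul_zero,
      Finset.sum_ite_eq, Finset.sum_ite_eq']

lemma Repr.oneSubXiMul (i : Fin n) {f : (Fin n → ℝ) → ℝ} (hf : IsConvexQuad f) :
    Repr (fun x => (1 - x i) * f x) := by
  classical
  refine ⟨fun _ _ => 0, fun j => if j = i then f else fun _ => 0, fun _ => 0,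
    fun _ => isConvexQuad_zero, fun j => ?_, isConvexQuad_zero, fun x => ?_⟩
  · by_cases h : j = i <;> simp [h, hf, isConvexQuad_zero]
  · simp [apply_ite (fun g : (Fin n → ℝ) → ℝ => g x), mul_ite, mul_zero,
      Finset.sum_ite_eq, Finset.sum_ite_eq']

lemma Repr.sqAny (a : ℝ) (v : Fin n → ℝ) :
    Repr (fun x : Fin n → ℝ => a * (v ⬝ᵥ x) ^ 2) := by
  refine ⟨fun j x => a * v j * (v ⬝ᵥ x), fun _ _ => 0, fun _ => 0,
    fun j => ?_, fun _ => isConvexQuad_zero, isConvexQuad_zero, fun x => ?_⟩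
  · exact isConvexQuad_congr (isConvexQuad_linear ((a * v j) • v))
      (fun x => by rw [smul_dotProduct]; simp [mul_assoc])
  · have h1 : ∑ j, x j * (a * v j * (v ⬝ᵥ x)) = (a * (v ⬝ᵥ x)) * ∑ j, v j * x j := by
      rw [Finset.mul_sum]
      exact Finset.sum_congr rfl fun j _ => by ring
    have h2 : ∑ j, v j * x j = v ⬝ᵥ x := rfl
    simp only [h1, h2]
    simp
    ring

lemma Repr.xiSq (a : ℝ) (i : Fin n) (v : Fin n → ℝ) :
    Repr (fun x : Fin n → ℝ => a * (x i * (v ⬝ᵥ x) ^ 2)) := by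
  rcases le_or_gt 0 a with ha | ha
  · exact (Repr.xiMul i (isConvexQuad_smul_sq a ha v)).congr (fun x => by ring)
  · have h1 : Repr (fun x : Fin n → ℝ => (1 - x i) * (-a * (v ⬝ᵥ x) ^ 2)) :=
      Repr.oneSubXiMul i (isConvexQuad_smul_sq (-a) (by linarith) v)
    exact (h1.add (Repr.sqAny a v)).congr (fun x => by ring)

lemma dot_single (j : Fin n) (x : Fin n → ℝ) : (Pi.single j 1 : Fin n → ℝ) ⬝ᵥ x = x j := by
  rw [single_dotProduct, one_mul]

lemma Repr.mon3 (c : ℝ) (i j k : Fin n) :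
    Repr (fun x : Fin n → ℝ => c * (x i * (x j * x k))) := by
  have h1 := Repr.xiSq (c / 2) i ((Pi.single j 1 : Fin n → ℝ) + Pi.single k 1)
  have h2 := Repr.xiSq (-c / 2) i (Pi.single j 1 : Fin n → ℝ)
  have h3 := Repr.xiSq (-c / 2) i (Pi.single k 1 : Fin n → ℝ)
  refine ((h1.add h2).add h3).congr (fun x => ?_)
  simp only [add_dotProduct, dot_single]
  ring

lemma Repr.mon2 (c : ℝ) (i j : Fin n) :
    Repr (fun x : Fin n → ℝ => c * (x i * x j)) := by
  have h : IsConvexQuad (fun x : Fin n → ℝ => c * x j) :=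
    isConvexQuad_congr (isConvexQuad_linear (Pi.single j c))
      (fun x => by rw [single_dotProduct])
  exact (Repr.xiMul i h).congr (fun x => by ring)

lemma Repr.mon1 (c : ℝ) (i : Fin n) : Repr (fun x : Fin n → ℝ => c * x i) :=
  Repr.ofConvexQuad (isConvexQuad_congr (isConvexQuad_linear (Pi.single i c))
    (fun x => by rw [single_dotProduct]))

lemma Repr.mon0 (c : ℝ) : Repr (fun _ : Fin n → ℝ => c) :=
  Repr.ofConvexQuad (isConvexQuad_const c)

lemma Repr.multiset (m : Multiset (Fin n)) (hm : Multiset.card m ≤ 3) (c : ℝ) :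
    Repr (fun x : Fin n → ℝ => c * (m.map x).prod) := by
  interval_cases h : Multiset.card m
  · obtain rfl := Multiset.card_eq_zero.mp h
    exact (Repr.mon0 c).congr (fun x => by simp)
  · obtain ⟨i, rfl⟩ := Multiset.card_eq_one.mp h
    exact (Repr.mon1 c i).congr (fun x => by simp)
  · obtain ⟨i, j, rfl⟩ := Multiset.card_eq_two.mp h
    exact (Repr.mon2 c i j).congr (fun x => by simp [mul_assoc])
  · obtain ⟨i, j, k, rfl⟩ := Multiset.card_eq_three.mp h
    exact (Repr.mon3 c i j k).congr (fun x => by simp [mul_assoc])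

lemma Repr.monomial (d : Fin n →₀ ℕ) (hd : (d.sum fun _ e => e) ≤ 3) (c : ℝ) :
    Repr (fun x : Fin n → ℝ => c * ∏ i, x i ^ d i) := by
  have hcard : Multiset.card d.toMultiset ≤ 3 := by
    rw [Finsupp.card_toMultiset]; exact hd
  refine (Repr.multiset d.toMultiset hcard c).congr (fun x => ?_)
  congr 1
  rw [Finsupp.toMultiset_map, Finsupp.prod_toMultiset,
    Finsupp.prod_mapDomain_index (fun _ => pow_zero _) (fun _ _ _ => pow_add _ _ _),
    Finsupp.prod_pow]

end SLCAux

/-- Every polynomial of degree at most 3 admits an SLC decomposition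
`p₃(x) = Σ_i x_i p₂^i(x) + Σ_i (1−x_i) q₂^i(x) + β₂(x)` with all
`p₂^i, q₂^i, β₂` convex quadratics. -/
theorem slc_decomposition_degree3 {n : ℕ} (p₃ : MvPolynomial (Fin n) ℝ)
    (hdeg : p₃.totalDegree ≤ 3) :
    ∃ (p₂ q₂ : Fin n → (Fin n → ℝ) → ℝ) (β₂ : (Fin n → ℝ) → ℝ),
      (∀ i, IsConvexQuad (p₂ i)) ∧ (∀ i, IsConvexQuad (q₂ i)) ∧ IsConvexQuad β₂ ∧
      ∀ x : Fin n → ℝ,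
        MvPolynomial.eval x p₃ =
          ∑ i, x i * p₂ i x + ∑ i, (1 - x i) * q₂ i x + β₂ x := by
  have key : SLCAux.Repr (fun x : Fin n → ℝ => MvPolynomial.eval x p₃) := by
    have h : ∀ d ∈ p₃.support,
        SLCAux.Repr (fun x : Fin n → ℝ => p₃.coeff d * ∏ i, x i ^ d i) := by
      intro d hd
      refine SLCAux.Repr.monomial d ?_ _
      exact le_trans (MvPolynomial.le_totalDegree hd) hdeg
    exact (SLCAux.Repr.sum p₃.support _ h).congr
      (fun x => (MvPolynomial.eval_eq' x p₃).symm)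
  obtain ⟨p, q, b, hp, hq, hb, he⟩ := key
  exact ⟨p, q, b, hp, hq, hb, he⟩
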